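/- Let $k \geq 2$, let $t_1, t_2$ be reals with $|t_1| = |t_2| \neq 0$, and let $a \neq b$ be elements of $[k]$. If the vector $v = t_1 e_a + t_2 e_b \in \mathbb{R}^k$ satisfies both $v^T \mathbf{b}^k_k = 0$ and $v^T \mathbf{b}^k_{k-1} = 0$, then we reach a contradiction: no such pair $(a,b)$ exists. Equivalently, for $a \neq b$ in $[k]$ and $|t_1|=|t_2|\neq 0$, the conditions $t_1(\mathbf{b}^k_k)_a + t_2(\mathbf{b}^k_k)_b = 0$ and $t_1(\mathbf{b}^k_{k-1})_a + t_2(\mathbf{b}^k_{k-1})_b = 0$ cannot both hold. -/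

import Mathlib

/-- The vector `b^k_a ∈ ℝ^k` (0-indexed): entry `i` is `(-1)^i * C(a-1, i)` for `i < a`, else `0`. -/
def bvec (k a : ℕ) : Fin k → ℝ :=
  fun i => if (i : ℕ) < a then (-1 : ℝ) ^ (i : ℕ) * ((a - 1).choose (i : ℕ)) else 0

lemma choose_mono_upto (n : ℕ) : ∀ {r s : ℕ}, r ≤ s → 2 * s ≤ n →
    n.choose r ≤ n.choose s := by
  intro r s h
  induction h with
  | refl => intro _; exact le_rfl
  | @step m h ih =>
      intro hs
      have h2m : 2 * m ≤ n := by omega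
      refine (ih h2m).trans ?_
      exact Nat.choose_le_succ_of_lt_half_left (by omega)

lemma choose_strict (n a b : ℕ) (hab : a < b) (hn : a + b < n) :
    n.choose a < n.choose b := by
  set c := min b (n - b) with hc
  have hbn : b ≤ n := by omega
  have hac : a < c := by omega
  have hcn : 2 * c ≤ n := by omega
  have hbc : n.choose b = n.choose c := by
    rcases min_cases b (n - b) with ⟨h1, _⟩ | ⟨h1, _⟩
    · rw [hc, h1]
    · rw [hc, h1, Nat.choose_symm hbn]
  rw [hbc]
  have hstep : n.choose a < n.choose (a + 1) := by
    have key := Nat.choose_succ_right_eq n a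
    have hpos : 0 < n.choose a := Nat.choose_pos (by omega)
    have hna : a + 1 < n - a := by omega
    nlinarith [key, hpos, hna]
  exact lt_of_lt_of_le hstep (choose_mono_upto n hac hcn)

lemma choose_eq_imp (n a b : ℕ) (ha : a ≤ n) (hb : b ≤ n) (hab : a ≠ b)
    (h : n.choose a = n.choose b) : a + b = n := by
  by_contra hne
  rcases Nat.lt_or_ge (a + b) n with hlt | hge
  · rcases Nat.lt_or_ge a b with h1 | h1
    · exact absurd h (Nat.ne_of_lt (choose_strict n a b h1 hlt))
    · have h1' : b < a := by omega
      exact absurd h.symm (Nat.ne_of_lt (choose_strict n b a h1' (by omega)))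
  · -- a + b > n; use symmetry
    have hgt : n < a + b := by omega
    rcases Nat.lt_or_ge a b with h1 | h1
    · have h' : n.choose a = n.choose (n - b) := by rw [h, Nat.choose_symm hb]
      have : n.choose (n - b) < n.choose a := choose_strict n (n - b) a (by omega) (by omega)
      omega
    · have h1' : b < a := by omega
      have h' : n.choose b = n.choose (n - a) := by rw [← h, Nat.choose_symm ha]
      have : n.choose (n - a) < n.choose b := choose_strict n (n - a) b (by omega) (by omega)
      omega

lemma abs_cancel (t₁ t₂ x y : ℝ) (habs : |t₁| = |t₂|) (ht₁ : t₁ ≠ 0)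
    (hx : 0 ≤ x) (hy : 0 ≤ y) (na nb : ℕ)
    (h : t₁ * ((-1 : ℝ) ^ na * x) + t₂ * ((-1 : ℝ) ^ nb * y) = 0) : x = y := by
  have he : t₁ * ((-1 : ℝ) ^ na * x) = -(t₂ * ((-1 : ℝ) ^ nb * y)) := by linarith
  have habs2 : |t₁ * ((-1 : ℝ) ^ na * x)| = |t₂ * ((-1 : ℝ) ^ nb * y)| := by
    rw [he, abs_neg]
  rw [abs_mul, abs_mul, abs_mul, abs_mul, abs_pow, abs_pow, abs_neg, abs_one,
    one_pow, one_pow, habs, abs_of_nonneg hx, abs_of_nonneg hy] at habs2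
  have ht2 : |t₂| ≠ 0 := by rw [← habs]; exact abs_ne_zero.mpr ht₁
  field_simp at habs2
  rcases habs2 with h | h
  · linarith

theorem stmt15 (k : ℕ) (hk : 2 ≤ k) (t₁ t₂ : ℝ) (habs : |t₁| = |t₂|) (ht₁ : t₁ ≠ 0)
    (a b : Fin k) (hab : a ≠ b)
    (h1 : t₁ * bvec k k a + t₂ * bvec k k b = 0)
    (h2 : t₁ * bvec k (k - 1) a + t₂ * bvec k (k - 1) b = 0) :
    False := by
  have ht₂ : t₂ ≠ 0 := by
    intro h; apply ht₁; rw [← abs_eq_zero, habs, h, abs_zero]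
  have habn : (a : ℕ) ≠ (b : ℕ) := fun h => hab (Fin.ext h)
  -- step 1: from h1 get a + b = k - 1
  have hb1a : bvec k k a = (-1 : ℝ) ^ (a : ℕ) * ((k - 1).choose (a : ℕ)) := by
    simp [bvec, a.isLt]
  have hb1b : bvec k k b = (-1 : ℝ) ^ (b : ℕ) * ((k - 1).choose (b : ℕ)) := by
    simp [bvec, b.isLt]
  rw [hb1a, hb1b] at h1
  have hCeq : ((k - 1).choose (a : ℕ) : ℝ) = ((k - 1).choose (b : ℕ) : ℝ) :=
    abs_cancel t₁ t₂ _ _ habs ht₁ (Nat.cast_nonneg _) (Nat.cast_nonneg _) _ _ h1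
  have hCeqn : (k - 1).choose (a : ℕ) = (k - 1).choose (b : ℕ) := by exact_mod_cast hCeq
  have hsum1 : (a : ℕ) + (b : ℕ) = k - 1 :=
    choose_eq_imp (k - 1) _ _ (by omega) (by omega) habn hCeqn
  -- step 2: use h2
  rcases Nat.lt_or_ge (a : ℕ) (k - 1) with ha2 | ha2
  · rcases Nat.lt_or_ge (b : ℕ) (k - 1) with hb2 | hb2
    · -- both < k-1
      have hb2a : bvec k (k - 1) a = (-1 : ℝ) ^ (a : ℕ) * ((k - 1 - 1).choose (a : ℕ)) := by
        simp [bvec, ha2]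
      have hb2b : bvec k (k - 1) b = (-1 : ℝ) ^ (b : ℕ) * ((k - 1 - 1).choose (b : ℕ)) := by
        simp [bvec, hb2]
      rw [hb2a, hb2b] at h2
      have hCeq2 : ((k - 1 - 1).choose (a : ℕ) : ℝ) = ((k - 1 - 1).choose (b : ℕ) : ℝ) :=
        abs_cancel t₁ t₂ _ _ habs ht₁ (Nat.cast_nonneg _) (Nat.cast_nonneg _) _ _ h2
      have hCeqn2 : (k - 1 - 1).choose (a : ℕ) = (k - 1 - 1).choose (b : ℕ) := by
        exact_mod_cast hCeq2
      have hsum2 : (a : ℕ) + (b : ℕ) = k - 1 - 1 :=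
        choose_eq_imp (k - 1 - 1) _ _ (by omega) (by omega) habn hCeqn2
      omega
    · -- b = k - 1, so a = 0
      have hbk : (b : ℕ) = k - 1 := by omega
      have hak : (a : ℕ) = 0 := by omega
      have hb2b : bvec k (k - 1) b = 0 := by simp [bvec, hbk]
      have halt : (a : ℕ) < k - 1 := by omega
      have hb2a : bvec k (k - 1) a = 1 := by
        simp [bvec, halt, hak]
        omega
      rw [hb2a, hb2b] at h2
      simp at h2
      exact ht₁ h2
  · -- a = k - 1, so b = 0
    have hak : (a : ℕ) = k - 1 := by omega
    have hbk : (b : ℕ) = 0 := by omega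
    have hb2a : bvec k (k - 1) a = 0 := by simp [bvec, hak]
    have hblt : (b : ℕ) < k - 1 := by omega
    have hb2b : bvec k (k - 1) b = 1 := by
      simp [bvec, hblt, hbk]
      omega
    rw [hb2a, hb2b] at h2
    simp at h2
    exact ht₂ h2
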